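/- Let Λ₂ = ℤ₂⁸ with the action of the 2-adic Lipschitz order 𝒪₂ = ℤ₂⟨i,j⟩ given by i ↦ R(i), j ↦ R(j) as above, and let J₂ = (1+i, 1+j, 1+k) be the Jacobson radical of 𝒪₂. Then dim_{𝔽₂}(J₂Λ₂/2Λ₂) = 5, hence dim_{𝔽₂}(Λ₂/J₂Λ₂) = 3, and therefore Λ₂ is not a free 𝒪₂-module. -/

import Mathlib

open scoped Quaternion

/-- The matrix `R(i)` of the `Q₈`-action on homology. -/
def Ri : Matrix (Fin 8) (Fin 8) ℤ :=
  !![0,-1,0,0,0,0,0,0;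
     1,0,0,0,0,0,0,0;
     0,0,0,-1,0,0,0,0;
     0,0,1,0,0,0,0,0;
     0,0,0,0,0,-1,0,0;
     0,0,0,0,1,0,0,0;
     0,0,0,0,0,0,0,-1;
     0,0,0,0,0,0,1,0]

/-- The matrix `R(j)` of the `Q₈`-action on homology. -/
def Rj : Matrix (Fin 8) (Fin 8) ℤ :=
  !![1,0,-1,-1,0,0,0,0;
     0,-1,-1,1,0,0,0,0;
     1,1,0,-1,0,0,0,0;
     1,-1,-1,0,0,0,0,0;
     0,0,0,-1,0,0,0,1;
     0,0,-1,0,0,0,1,0;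
     1,1,0,-1,0,-1,0,0;
     1,-1,-1,0,-1,0,0,0]

/-- `R(k) = R(i)·R(j)`. -/
def Rk : Matrix (Fin 8) (Fin 8) ℤ := Ri * Rj

/-- The span over `𝔽₂` of the columns of `I+R(i)`, `I+R(j)`, `I+R(k)` reduced
mod 2; this is `J₂Λ₂/2Λ₂` where `J₂ = (1+i,1+j,1+k)` is the Jacobson radical of
the 2-adic Lipschitz order `𝒪₂`. -/
noncomputable def JLambda : Submodule (ZMod 2) (Fin 8 → ZMod 2) :=
  Submodule.span (ZMod 2)
    ((Set.range fun k r => ((1 + Ri).map (Int.cast : ℤ → ZMod 2)) r k) ∪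
     (Set.range fun k r => ((1 + Rj).map (Int.cast : ℤ → ZMod 2)) r k) ∪
     (Set.range fun k r => ((1 + Rk).map (Int.cast : ℤ → ZMod 2)) r k))

namespace Lambda2Aux

def bvec : Fin 5 → (Fin 8 → ZMod 2) :=
  ![![1,1,0,0,0,0,0,0], ![0,0,1,1,0,0,0,0], ![0,0,0,0,1,1,0,0],
    ![0,0,0,0,0,0,1,1], ![1,1,1,1,0,1,0,1]]

def cA : Fin 8 → Fin 5 → ZMod 2 :=
  ![![1,0,0,0,0],![1,0,0,0,0],![0,1,0,0,0],![0,1,0,0,0],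
    ![0,0,1,0,0],![0,0,1,0,0],![0,0,0,1,0],![0,0,0,1,0]]
def cB : Fin 8 → Fin 5 → ZMod 2 :=
  ![![0,1,0,1,0],![0,1,0,1,0],![0,0,0,0,1],![0,0,1,1,1],
    ![1,1,1,0,1],![1,1,0,1,1],![1,1,0,1,1],![1,1,1,0,1]]
def cC : Fin 8 → Fin 5 → ZMod 2 :=
  ![![1,1,0,1,0],![1,1,0,1,0],![0,1,1,1,1],![0,1,0,0,1],
    ![1,1,1,1,1],![1,1,0,0,1],![1,1,1,1,1],![1,1,0,0,1]]

lemma hA : ∀ k, (fun r => ((1 + Ri).map (Int.cast : ℤ → ZMod 2)) r k) = ∑ i, cA k i • bvec i := by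
  decide
lemma hB : ∀ k, (fun r => ((1 + Rj).map (Int.cast : ℤ → ZMod 2)) r k) = ∑ i, cB k i • bvec i := by
  decide
lemma hC : ∀ k, (fun r => ((1 + Rk).map (Int.cast : ℤ → ZMod 2)) r k) = ∑ i, cC k i • bvec i := by
  decide

lemma bvec_indep : LinearIndependent (ZMod 2) bvec := by
  rw [Fintype.linearIndependent_iff]
  decide

lemma span_eq : JLambda = Submodule.span (ZMod 2) (Set.range bvec) := by
  apply le_antisymm
  · rw [JLambda, Submodule.span_le]
    rintro x ((⟨k, rfl⟩ | ⟨k, rfl⟩) | ⟨k, rfl⟩)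
    · beta_reduce
      rw [hA k]
      exact Submodule.sum_mem _ fun i _ =>
        Submodule.smul_mem _ _ (Submodule.subset_span ⟨i, rfl⟩)
    · beta_reduce
      rw [hB k]
      exact Submodule.sum_mem _ fun i _ =>
        Submodule.smul_mem _ _ (Submodule.subset_span ⟨i, rfl⟩)
    · beta_reduce
      rw [hC k]
      exact Submodule.sum_mem _ fun i _ =>
        Submodule.smul_mem _ _ (Submodule.subset_span ⟨i, rfl⟩)
  · rw [Submodule.span_le]
    rintro x ⟨i, rfl⟩
    fin_cases i
    · exact Submodule.subset_span (Or.inl (Or.inl ⟨0, by decide⟩))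
    · exact Submodule.subset_span (Or.inl (Or.inl ⟨2, by decide⟩))
    · exact Submodule.subset_span (Or.inl (Or.inl ⟨4, by decide⟩))
    · exact Submodule.subset_span (Or.inl (Or.inl ⟨6, by decide⟩))
    · exact Submodule.subset_span (Or.inl (Or.inr ⟨2, by decide⟩))

lemma finrank_JLambda : Module.finrank (ZMod 2) JLambda = 5 := by
  rw [span_eq, finrank_span_eq_card bvec_indep]
  rfl

lemma finrank_quot : Module.finrank (ZMod 2) ((Fin 8 → ZMod 2) ⧸ JLambda) = 3 := by
  have h := Submodule.finrank_quotient_add_finrank JLambda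
  rw [finrank_JLambda] at h
  have h8 : Module.finrank (ZMod 2) (Fin 8 → ZMod 2) = 8 := by
    simp [Module.finrank_pi]
  omega

end Lambda2Aux

namespace L2A

open Matrix

abbrev F := ZMod 2
noncomputable abbrev τ : ℤ_[2] →+* F := PadicInt.toZMod

def Ab : Matrix (Fin 8) (Fin 8) F := Ri.map Int.cast
def Bb : Matrix (Fin 8) (Fin 8) F := Rj.map Int.cast

lemma matF_add_self (X : Matrix (Fin 8) (Fin 8) F) : X + X = 0 := by
  ext i j
  rw [Matrix.add_apply, Matrix.zero_apply]
  exact CharTwo.add_self_eq_zero _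

lemma vecF_add_self (x : Fin 8 → F) : x + x = 0 := by
  funext r
  exact CharTwo.add_self_eq_zero _

lemma tau_natcast (z : ℕ) : τ ((z : ℤ_[2])) = (z : F) := map_natCast τ z

lemma tau_val (e : F) : τ ((e.val : ℤ_[2])) = e := by
  rw [tau_natcast]
  exact ZMod.natCast_rightInverse e

lemma exists_two_mul (s : ℤ_[2]) (hs : τ s = 0) : ∃ t : ℤ_[2], s = t + t := by
  have h2 : s ∈ RingHom.ker τ := hs
  rw [PadicInt.ker_toZMod, PadicInt.maximalIdeal_eq_span_p, Ideal.mem_span_singleton] at h2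
  obtain ⟨t, ht⟩ := h2
  exact ⟨t, by rw [ht]; push_cast; ring⟩

lemma scalar_decomp (s : ℤ_[2]) : ∃ t : ℤ_[2], s = ((τ s).val : ℤ_[2]) + (t + t) := by
  obtain ⟨t, ht⟩ := exists_two_mul (s - ((τ s).val : ℤ_[2])) (by rw [map_sub, tau_val]; ring)
  exact ⟨t, by linear_combination ht⟩

section Phi

variable (φ : ℍ[ℤ_[2],-1,-1] →+* Matrix (Fin 8) (Fin 8) ℤ_[2])

lemma red_phi_coe (s : ℤ_[2]) :
    (φ ((s : ℍ[ℤ_[2],-1,-1]))).map τ = τ s • (1 : Matrix (Fin 8) (Fin 8) F) := by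
  obtain ⟨t, ht⟩ := scalar_decomp s
  have hH : (s : ℍ[ℤ_[2],-1,-1]) =
      (((τ s).val : ℕ) : ℍ[ℤ_[2],-1,-1]) + ((t : ℍ[ℤ_[2],-1,-1]) + (t : ℍ[ℤ_[2],-1,-1])) := by
    rw [← QuaternionAlgebra.coe_natCast, ← QuaternionAlgebra.coe_add, ← QuaternionAlgebra.coe_add,
      ← ht]
  rw [hH, map_add, map_add, map_natCast φ]
  have : ((φ (t : ℍ[ℤ_[2],-1,-1]) + φ (t : ℍ[ℤ_[2],-1,-1]))).map τ
      = (φ (t : ℍ[ℤ_[2],-1,-1])).map τ + (φ (t : ℍ[ℤ_[2],-1,-1])).map τ := by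
    exact Matrix.map_add _ (by intro a b; exact map_add τ a b) _ _
  rw [show ((((τ s).val : ℕ) : Matrix (Fin 8) (Fin 8) ℤ_[2])
        + (φ (t : ℍ[ℤ_[2],-1,-1]) + φ (t : ℍ[ℤ_[2],-1,-1]))).map τ
      = (((τ s).val : ℕ) : Matrix (Fin 8) (Fin 8) ℤ_[2]).map τ
        + ((φ (t : ℍ[ℤ_[2],-1,-1]) + φ (t : ℍ[ℤ_[2],-1,-1]))).map τ from
    Matrix.map_add _ (by intro a b; exact map_add τ a b) _ _, this, matF_add_self, add_zero]
  have hnat : (((τ s).val : ℕ) : Matrix (Fin 8) (Fin 8) ℤ_[2]).map τ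
      = (((τ s).val : ℕ) : Matrix (Fin 8) (Fin 8) F) := by
    have := map_natCast (τ.mapMatrix : Matrix (Fin 8) (Fin 8) ℤ_[2] →+* Matrix (Fin 8) (Fin 8) F)
      ((τ s).val)
    rwa [RingHom.mapMatrix_apply] at this
  rw [hnat]
  have : (((τ s).val : ℕ) : Matrix (Fin 8) (Fin 8) F) = ((τ s).val : ℕ) • (1 : Matrix (Fin 8) (Fin 8) F) := by
    rw [nsmul_eq_mul, mul_one]
  rw [this, ← Nat.cast_smul_eq_nsmul F, ZMod.natCast_rightInverse]

lemma quat_decomp (α : ℍ[ℤ_[2],-1,-1]) :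
    α = (α.re : ℍ[ℤ_[2],-1,-1])
      + (α.imI : ℍ[ℤ_[2],-1,-1]) * ⟨0, 1, 0, 0⟩
      + (α.imJ : ℍ[ℤ_[2],-1,-1]) * ⟨0, 0, 1, 0⟩
      + (α.imK : ℍ[ℤ_[2],-1,-1]) * ((⟨0, 1, 0, 0⟩ : ℍ[ℤ_[2],-1,-1]) * ⟨0, 0, 1, 0⟩) := by
  ext <;>
    simp [QuaternionAlgebra.re_mul, QuaternionAlgebra.imI_mul, QuaternionAlgebra.imJ_mul,
      QuaternionAlgebra.imK_mul, QuaternionAlgebra.re_coe, QuaternionAlgebra.imI_coe,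
      QuaternionAlgebra.imJ_coe, QuaternionAlgebra.imK_coe]

lemma red_RZ (M : Matrix (Fin 8) (Fin 8) ℤ) :
    (M.map (Int.cast : ℤ → ℤ_[2])).map τ = M.map (Int.cast : ℤ → F) := by
  rw [Matrix.map_map]
  have h : (⇑τ ∘ (Int.cast : ℤ → ℤ_[2])) = (Int.cast : ℤ → F) :=
    funext fun z => map_intCast τ z
  rw [h]

lemma red_phi (hi : φ ⟨0, 1, 0, 0⟩ = Ri.map (Int.cast : ℤ → ℤ_[2]))
    (hj : φ ⟨0, 0, 1, 0⟩ = Rj.map (Int.cast : ℤ → ℤ_[2])) (α : ℍ[ℤ_[2],-1,-1]) :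
    (φ α).map τ = τ α.re • 1 + τ α.imI • Ab + τ α.imJ • Bb + τ α.imK • (Ab * Bb) := by
  have hmapadd : ∀ X Y : Matrix (Fin 8) (Fin 8) ℤ_[2], (X + Y).map τ = X.map τ + Y.map τ :=
    fun X Y => Matrix.map_add _ (by intro a b; exact map_add τ a b) _ _
  have hmapmul : ∀ X Y : Matrix (Fin 8) (Fin 8) ℤ_[2], (X * Y).map τ = X.map τ * Y.map τ := by
    intro X Y
    have := map_mul (τ.mapMatrix : Matrix (Fin 8) (Fin 8) ℤ_[2] →+* Matrix (Fin 8) (Fin 8) F) X Y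
    simpa [RingHom.mapMatrix_apply] using this
  conv_lhs => rw [quat_decomp α]
  rw [map_add, map_add, map_add, _root_.map_mul, _root_.map_mul, _root_.map_mul, _root_.map_mul, hi, hj]
  rw [hmapadd, hmapadd, hmapadd, hmapmul, hmapmul, hmapmul, hmapmul]
  rw [red_phi_coe, red_phi_coe, red_phi_coe, red_phi_coe, red_RZ, red_RZ]
  show _ = _
  rw [show (Ab : Matrix (Fin 8) (Fin 8) F) = Ri.map Int.cast from rfl,
    show (Bb : Matrix (Fin 8) (Fin 8) F) = Rj.map Int.cast from rfl]
  simp only [smul_mul_assoc, one_mul]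

end Phi

theorem aux3 (φ : ℍ[ℤ_[2],-1,-1] →+* Matrix (Fin 8) (Fin 8) ℤ_[2])
    (hi : φ ⟨0, 1, 0, 0⟩ = Ri.map (Int.cast : ℤ → ℤ_[2]))
    (hj : φ ⟨0, 0, 1, 0⟩ = Rj.map (Int.cast : ℤ → ℤ_[2]))
    (hJ5 : Module.finrank F JLambda = 5)
    (n : ℕ) (v : Fin n → (Fin 8 → ℤ_[2]))
    (h : ∀ w : Fin 8 → ℤ_[2], ∃! q : Fin n → ℍ[ℤ_[2],-1,-1],
        w = ∑ l : Fin n, (φ (q l)).mulVec (v l)) : False := by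
  classical
  set u : Fin n → (Fin 8 → F) := fun l r => τ (v l r) with hu
  have hpsi : ∀ q : Fin n → ℍ[ℤ_[2],-1,-1],
      (fun r => τ ((∑ l : Fin n, (φ (q l)).mulVec (v l)) r)) =
      ∑ l : Fin n, (τ (q l).re • u l + τ (q l).imI • Ab.mulVec (u l)
        + τ (q l).imJ • Bb.mulVec (u l) + τ (q l).imK • (Ab * Bb).mulVec (u l)) := by
    intro q
    funext r
    rw [Finset.sum_apply, map_sum, Finset.sum_apply]
    refine Finset.sum_congr rfl fun l _ => ?_
    rw [RingHom.map_mulVec τ (φ (q l)) (v l) r, red_phi φ hi hj (q l)]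
    simp [Matrix.add_mulVec, Matrix.smul_mulVec, Matrix.one_mulVec]
    rfl
  have hker : ∀ q : Fin n → ℍ[ℤ_[2],-1,-1],
      (fun r => τ ((∑ l : Fin n, (φ (q l)).mulVec (v l)) r)) = 0 →
      ∀ l, τ (q l).re = 0 ∧ τ (q l).imI = 0 ∧ τ (q l).imJ = 0 ∧ τ (q l).imK = 0 := by
    intro q hq
    have hdvd : ∀ r, ∃ t, (∑ l : Fin n, (φ (q l)).mulVec (v l)) r = t + t := by
      intro r
      exact exists_two_mul _ (congrFun hq r)
    choose y hy using hdvd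
    obtain ⟨x, hx⟩ := (h y).exists
    have hq2 : (∑ l : Fin n, (φ (q l)).mulVec (v l))
        = (∑ l : Fin n, (φ ((fun l => x l + x l) l)).mulVec (v l)) := by
      funext r
      rw [hy r]
      have hstep : (∑ l : Fin n, (φ (x l + x l)).mulVec (v l)) r
          = (∑ l : Fin n, (φ (x l)).mulVec (v l)) r + (∑ l : Fin n, (φ (x l)).mulVec (v l)) r := by
        rw [Finset.sum_apply, Finset.sum_apply, ← Finset.sum_add_distrib]
        refine Finset.sum_congr rfl fun l _ => ?_
        rw [map_add, Matrix.add_mulVec]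
        rfl
      rw [hstep, ← hx]
    have hq3 := (h (∑ l : Fin n, (φ (q l)).mulVec (v l))).unique rfl hq2
    intro l
    have hql : q l = x l + x l := congrFun hq3 l
    refine ⟨?_, ?_, ?_, ?_⟩ <;>
      rw [hql] <;>
      simp only [QuaternionAlgebra.re_add, QuaternionAlgebra.imI_add, QuaternionAlgebra.imJ_add,
        QuaternionAlgebra.imK_add, map_add] <;>
      exact CharTwo.add_self_eq_zero _
  have hsurj : ∀ w' : Fin 8 → F, ∃ q : Fin n → ℍ[ℤ_[2],-1,-1],
      (fun r => τ ((∑ l : Fin n, (φ (q l)).mulVec (v l)) r)) = w' := by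
    intro w'
    obtain ⟨q, hq⟩ := (h (fun r => ((w' r).val : ℤ_[2]))).exists
    refine ⟨q, ?_⟩
    funext r
    rw [show (∑ l : Fin n, (φ (q l)).mulVec (v l)) r = (((w' r).val : ℕ) : ℤ_[2]) from
      (congrFun hq r).symm]
    exact tau_val (w' r)
  set g : Fin n × Fin 4 → (Fin 8 → F) := fun p =>
    ![u p.1, Ab.mulVec (u p.1), Bb.mulVec (u p.1), (Ab * Bb).mulVec (u p.1)] p.2 with hg
  have hgtop : Submodule.span F (Set.range g) = ⊤ := by
    rw [eq_top_iff]
    intro w' _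
    obtain ⟨q, hq⟩ := hsurj w'
    rw [← hq, hpsi q]
    refine Submodule.sum_mem _ fun l _ => ?_
    have m0 : u l ∈ Submodule.span F (Set.range g) :=
      Submodule.subset_span ⟨(l, 0), rfl⟩
    have m1 : Ab.mulVec (u l) ∈ Submodule.span F (Set.range g) :=
      Submodule.subset_span ⟨(l, 1), rfl⟩
    have m2 : Bb.mulVec (u l) ∈ Submodule.span F (Set.range g) :=
      Submodule.subset_span ⟨(l, 2), rfl⟩
    have m3 : (Ab * Bb).mulVec (u l) ∈ Submodule.span F (Set.range g) :=
      Submodule.subset_span ⟨(l, 3), rfl⟩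
    exact add_mem (add_mem (add_mem (Submodule.smul_mem _ _ m0) (Submodule.smul_mem _ _ m1))
      (Submodule.smul_mem _ _ m2)) (Submodule.smul_mem _ _ m3)
  have hn2 : 2 ≤ n := by
    have hle := finrank_span_le_card (R := F) (Set.range g)
    rw [hgtop, finrank_top] at hle
    have h8 : Module.finrank F (Fin 8 → F) = 8 := by simp
    have hcard : (Set.range g).toFinset.card ≤ n * 4 := by
      rw [Set.toFinset_range]
      calc (Finset.univ.image g).card ≤ (Finset.univ : Finset (Fin n × Fin 4)).card :=
            Finset.card_image_le
        _ = n * 4 := by simp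
    omega
  set l0 : Fin n := ⟨0, by omega⟩ with hl0
  set l1 : Fin n := ⟨1, by omega⟩ with hl1
  have hne : l0 ≠ l1 := by
    simp [hl0, hl1, Fin.ext_iff]
  have hne' : l1 ≠ l0 := hne.symm
  set d : Fin 6 → (Fin 8 → F) :=
    ![u l0 + Ab.mulVec (u l0), u l0 + Bb.mulVec (u l0), u l0 + (Ab * Bb).mulVec (u l0),
      u l1 + Ab.mulVec (u l1), u l1 + Bb.mulVec (u l1), u l1 + (Ab * Bb).mulVec (u l1)] with hd
  have hdind : LinearIndependent F d := by
    rw [Fintype.linearIndependent_iff]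
    intro ε hε
    set c : Fin 6 → ℤ_[2] := fun m => (((ε m).val : ℕ) : ℤ_[2]) with hc
    set q : Fin n → ℍ[ℤ_[2],-1,-1] := fun l =>
      if l = l0 then ⟨c 0 + c 1 + c 2, c 0, c 1, c 2⟩
      else if l = l1 then ⟨c 3 + c 4 + c 5, c 3, c 4, c 5⟩ else 0 with hqdef
    have hql0 : q l0 = ⟨c 0 + c 1 + c 2, c 0, c 1, c 2⟩ := by simp [hqdef]
    have hql1 : q l1 = ⟨c 3 + c 4 + c 5, c 3, c 4, c 5⟩ := by simp [hqdef, hne']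
    have hτc : ∀ m, τ (c m) = ε m := fun m => tau_val (ε m)
    have hpsi0 : (fun r => τ ((∑ l : Fin n, (φ (q l)).mulVec (v l)) r)) = 0 := by
      rw [hpsi q]
      have hzero : ∀ l ∈ (Finset.univ : Finset (Fin n)), l ∉ ({l0, l1} : Finset (Fin n)) →
          (τ (q l).re • u l + τ (q l).imI • Ab.mulVec (u l)
            + τ (q l).imJ • Bb.mulVec (u l) + τ (q l).imK • (Ab * Bb).mulVec (u l)) = 0 := by
        intro l _ hl
        simp only [Finset.mem_insert, Finset.mem_singleton, not_or] at hl
        have hq0 : q l = 0 := by simp [hqdef, hl.1, hl.2]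
        rw [hq0]
        simp
      rw [← Finset.sum_subset (Finset.subset_univ ({l0, l1} : Finset (Fin n))) hzero,
        Finset.sum_pair hne, hql0, hql1]
      have key : (τ (c 0 + c 1 + c 2) • u l0 + τ (c 0) • Ab.mulVec (u l0)
            + τ (c 1) • Bb.mulVec (u l0) + τ (c 2) • (Ab * Bb).mulVec (u l0))
          + (τ (c 3 + c 4 + c 5) • u l1 + τ (c 3) • Ab.mulVec (u l1)
            + τ (c 4) • Bb.mulVec (u l1) + τ (c 5) • (Ab * Bb).mulVec (u l1))
          = ∑ m, ε m • d m := by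
        rw [Fin.sum_univ_six]
        rw [show d 0 = u l0 + Ab.mulVec (u l0) from rfl, show d 1 = u l0 + Bb.mulVec (u l0) from rfl,
          show d 2 = u l0 + (Ab * Bb).mulVec (u l0) from rfl,
          show d 3 = u l1 + Ab.mulVec (u l1) from rfl, show d 4 = u l1 + Bb.mulVec (u l1) from rfl,
          show d 5 = u l1 + (Ab * Bb).mulVec (u l1) from rfl]
        simp only [map_add, hτc]
        module
      exact key.trans hε
    have hc0 := hker q hpsi0 l0
    have hc1 := hker q hpsi0 l1
    rw [hql0] at hc0
    rw [hql1] at hc1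
    intro m
    fin_cases m
    · have := hc0.2.1; rwa [show (⟨c 0 + c 1 + c 2, c 0, c 1, c 2⟩ : ℍ[ℤ_[2],-1,-1]).imI = c 0 from rfl, hτc 0] at this
    · have := hc0.2.2.1; rwa [show (⟨c 0 + c 1 + c 2, c 0, c 1, c 2⟩ : ℍ[ℤ_[2],-1,-1]).imJ = c 1 from rfl, hτc 1] at this
    · have := hc0.2.2.2; rwa [show (⟨c 0 + c 1 + c 2, c 0, c 1, c 2⟩ : ℍ[ℤ_[2],-1,-1]).imK = c 2 from rfl, hτc 2] at this
    · have := hc1.2.1; rwa [show (⟨c 3 + c 4 + c 5, c 3, c 4, c 5⟩ : ℍ[ℤ_[2],-1,-1]).imI = c 3 from rfl, hτc 3] at this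
    · have := hc1.2.2.1; rwa [show (⟨c 3 + c 4 + c 5, c 3, c 4, c 5⟩ : ℍ[ℤ_[2],-1,-1]).imJ = c 4 from rfl, hτc 4] at this
    · have := hc1.2.2.2; rwa [show (⟨c 3 + c 4 + c 5, c 3, c 4, c 5⟩ : ℍ[ℤ_[2],-1,-1]).imK = c 5 from rfl, hτc 5] at this
  have hmulmem : ∀ (M : Matrix (Fin 8) (Fin 8) ℤ) (x : Fin 8 → F),
      ((M.map (Int.cast : ℤ → F)).mulVec x) ∈
        Submodule.span F (Set.range fun k r => (M.map (Int.cast : ℤ → F)) r k) := by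
    intro M x
    have hrw : (M.map (Int.cast : ℤ → F)).mulVec x
        = ∑ k, x k • (fun r => (M.map (Int.cast : ℤ → F)) r k) := by
      funext r
      rw [Finset.sum_apply]
      simp [Matrix.mulVec, dotProduct, mul_comm]
    rw [hrw]
    exact Submodule.sum_mem _ fun k _ => Submodule.smul_mem _ _ (Submodule.subset_span ⟨k, rfl⟩)
  have hone : ∀ (M : Matrix (Fin 8) (Fin 8) ℤ) (x : Fin 8 → F),
      x + (M.map (Int.cast : ℤ → F)).mulVec x = ((1 + M).map (Int.cast : ℤ → F)).mulVec x := by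
    intro M x
    rw [Matrix.map_add _ (by intro a b; exact Int.cast_add a b),
      Matrix.map_one _ Int.cast_zero Int.cast_one, Matrix.add_mulVec, Matrix.one_mulVec]
  have hAB : Ab * Bb = Rk.map (Int.cast : ℤ → F) := by
    rw [Rk]
    exact (Matrix.map_mul (f := Int.castRingHom F)).symm
  have hdmem : ∀ m, d m ∈ JLambda := by
    intro m
    fin_cases m
    · show u l0 + Ab.mulVec (u l0) ∈ JLambda
      rw [show Ab = Ri.map (Int.cast : ℤ → F) from rfl, hone Ri (u l0)]
      exact Submodule.span_mono (fun y hy => Or.inl (Or.inl hy)) (hmulmem (1 + Ri) (u l0))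
    · show u l0 + Bb.mulVec (u l0) ∈ JLambda
      rw [show Bb = Rj.map (Int.cast : ℤ → F) from rfl, hone Rj (u l0)]
      exact Submodule.span_mono (fun y hy => Or.inl (Or.inr hy)) (hmulmem (1 + Rj) (u l0))
    · show u l0 + (Ab * Bb).mulVec (u l0) ∈ JLambda
      rw [hAB, hone Rk (u l0)]
      exact Submodule.span_mono (fun y hy => Or.inr hy) (hmulmem (1 + Rk) (u l0))
    · show u l1 + Ab.mulVec (u l1) ∈ JLambda
      rw [show Ab = Ri.map (Int.cast : ℤ → F) from rfl, hone Ri (u l1)]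
      exact Submodule.span_mono (fun y hy => Or.inl (Or.inl hy)) (hmulmem (1 + Ri) (u l1))
    · show u l1 + Bb.mulVec (u l1) ∈ JLambda
      rw [show Bb = Rj.map (Int.cast : ℤ → F) from rfl, hone Rj (u l1)]
      exact Submodule.span_mono (fun y hy => Or.inl (Or.inr hy)) (hmulmem (1 + Rj) (u l1))
    · show u l1 + (Ab * Bb).mulVec (u l1) ∈ JLambda
      rw [hAB, hone Rk (u l1)]
      exact Submodule.span_mono (fun y hy => Or.inr hy) (hmulmem (1 + Rk) (u l1))
  have hspan_le : Submodule.span F (Set.range d) ≤ JLambda := by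
    rw [Submodule.span_le]
    rintro x ⟨m, rfl⟩
    exact hdmem m
  have h6 : (6 : ℕ) ≤ Module.finrank F JLambda := by
    have hmono := Submodule.finrank_mono hspan_le
    rwa [finrank_span_eq_card hdind, Fintype.card_fin] at hmono
  rw [hJ5] at h6
  omega

end L2A

/-- `dim_{𝔽₂}(J₂Λ₂/2Λ₂) = 5`, hence `dim_{𝔽₂}(Λ₂/J₂Λ₂) = 3`, and therefore
`Λ₂ = ℤ₂⁸` is not a free module over the 2-adic Lipschitz order
`𝒪₂ = ℤ₂⟨i,j⟩` (acting via `i ↦ R(i)`, `j ↦ R(j)`).  Freeness is phrased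
concretely: there is no finite family `v` of vectors such that every `w ∈ Λ₂`
is uniquely `w = Σ φ(qₗ) · vₗ` with `qₗ ∈ 𝒪₂`. -/
theorem lambda2_not_free_over_lipschitz_order :
    Module.finrank (ZMod 2) JLambda = 5 ∧
    Module.finrank (ZMod 2) ((Fin 8 → ZMod 2) ⧸ JLambda) = 3 ∧
    ∀ φ : ℍ[ℤ_[2],-1,-1] →+* Matrix (Fin 8) (Fin 8) ℤ_[2],
      φ ⟨0, 1, 0, 0⟩ = Ri.map (Int.cast : ℤ → ℤ_[2]) →
      φ ⟨0, 0, 1, 0⟩ = Rj.map (Int.cast : ℤ → ℤ_[2]) →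
      ¬ ∃ (n : ℕ) (v : Fin n → (Fin 8 → ℤ_[2])),
          ∀ w : Fin 8 → ℤ_[2], ∃! q : Fin n → ℍ[ℤ_[2],-1,-1],
            w = ∑ l : Fin n, (φ (q l)).mulVec (v l) := by
  refine ⟨Lambda2Aux.finrank_JLambda, Lambda2Aux.finrank_quot, ?_⟩
  intro φ hi hj
  rintro ⟨n, v, h⟩
  exact L2A.aux3 φ hi hj Lambda2Aux.finrank_JLambda n v h
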